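/- arXiv:2602.06514 — 2 statements merged into one kernel-verified Lean document; each statement's English description precedes it below -/
import Mathlib

section
/- Let $p_1 \le p_2 \le \cdots \le p_n$ be natural numbers, $m \ge 1$, and suppose $x : [m] \times [n] \to \mathbb{N}$ satisfies $\sum_{i=1}^m \sum_{j=1}^n x_{i,j} = n$. If $\sum_{j=1}^n n^j \sum_{i=1}^m x_{i,j} \ge \sum_{j=1}^n n^j$ and there exists some $j$ with $\sum_{i=1}^m x_{i,j} \ne 1$, then there exist indices $j_1 < j_2$ in $[n]$ with $\sum_{i=1}^m x_{i,j_1} = 0$ and $\sum_{i=1}^m x_{i,j_2} > 1$. -/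
theorem stmt_0 (n m : ℕ) (hm : 1 ≤ m) (p : Fin n → ℕ) (hp : Monotone p)
    (x : Fin m → Fin n → ℕ)
    (hsum : ∑ i, ∑ j, x i j = n)
    (hobj : ∑ j : Fin n, n ^ ((j : ℕ) + 1) * ∑ i, x i j ≥ ∑ j : Fin n, n ^ ((j : ℕ) + 1))
    (hbad : ∃ j : Fin n, ∑ i, x i j ≠ 1) :
    ∃ j₁ j₂ : Fin n, j₁ < j₂ ∧ (∑ i, x i j₁) = 0 ∧ 1 < ∑ i, x i j₂ := by
  classical
  set y : Fin n → ℕ := fun j => ∑ i, x i j with hy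
  have hsum' : ∑ j, y j = n := by rw [Finset.sum_comm] at hsum; exact hsum
  -- there is a zero
  have hz : ∃ j, y j = 0 := by
    by_contra h
    push_neg at h
    obtain ⟨j, hj⟩ := hbad
    have hlt : ∑ _j : Fin n, 1 < ∑ j, y j := by
      refine Finset.sum_lt_sum (fun k _ => Nat.one_le_iff_ne_zero.mpr (h k))
        ⟨j, Finset.mem_univ j,
          lt_of_le_of_ne (Nat.one_le_iff_ne_zero.mpr (h j)) (Ne.symm hj)⟩
    rw [hsum'] at hlt
    simp at hlt
  obtain ⟨j0, hj0⟩ := hz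
  have hn : 0 < n := j0.pos
  -- take maximal zero index
  set S : Finset (Fin n) := Finset.univ.filter (fun j => y j = 0) with hS
  have hSne : S.Nonempty := ⟨j0, by simp [hS, hj0]⟩
  set j₁ : Fin n := S.max' hSne with hj₁def
  have hj₁0 : y j₁ = 0 := by
    have := S.max'_mem hSne
    simpa [hS] using this
  by_contra hcon
  push_neg at hcon
  -- every j > j₁ has y j = 1
  have hone : ∀ j : Fin n, j₁ < j → y j = 1 := by
    intro j hj
    have hne : y j ≠ 0 := by
      intro h0
      have : j ∈ S := by simp [hS, h0]
      exact absurd (S.le_max' j this) (not_le.mpr hj)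
    have hle : y j ≤ 1 := hcon j₁ j hj hj₁0
    omega
  -- sum over Ioi j₁ of y is its card
  have hIoi_y : ∑ j ∈ Finset.Ioi j₁, y j = n - 1 - (j₁ : ℕ) := by
    rw [Finset.sum_congr rfl (fun j hj => hone j (Finset.mem_Ioi.mp hj))]
    simp [Fin.card_Ioi]
  have hsplit : ∀ f : Fin n → ℕ,
      ∑ j, f j = ∑ j ∈ Finset.Iio j₁, f j + (f j₁ + ∑ j ∈ Finset.Ioi j₁, f j) := by
    intro f
    rw [← Finset.sum_insert (by simp), Finset.Ioi_insert,
      ← Finset.sum_filter_add_sum_filter_not Finset.univ (fun j => j < j₁) f]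
    congr 1
    · congr 1; ext j; simp
    · congr 1; ext j; simp
  have hIio_y : ∑ j ∈ Finset.Iio j₁, y j = (j₁ : ℕ) + 1 := by
    have := hsplit y
    rw [hsum', hj₁0, hIoi_y] at this
    have hlt : (j₁ : ℕ) < n := j₁.isLt
    omega
  -- j₁ must be positive
  have hj₁pos : 0 < (j₁ : ℕ) := by
    by_contra h
    push_neg at h
    have hempty : Finset.Iio j₁ = ∅ := by
      ext j
      simp only [Finset.mem_Iio, Finset.notMem_empty, iff_false, not_lt]
      exact Fin.le_def.mpr (by omega)
    rw [hempty] at hIio_y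
    simp at hIio_y
  -- now contradict hobj
  have hA : ∑ j ∈ Finset.Iio j₁, n ^ ((j : ℕ) + 1) * y j ≤ n ^ ((j₁ : ℕ) + 1) := by
    calc ∑ j ∈ Finset.Iio j₁, n ^ ((j : ℕ) + 1) * y j
        ≤ ∑ j ∈ Finset.Iio j₁, n ^ (j₁ : ℕ) * y j := by
          refine Finset.sum_le_sum fun j hj => ?_
          have hjlt : (j : ℕ) < (j₁ : ℕ) := Fin.lt_def.mp (Finset.mem_Iio.mp hj)
          exact Nat.mul_le_mul_right _ (Nat.pow_le_pow_right hn (by omega))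
      _ = n ^ (j₁ : ℕ) * ((j₁ : ℕ) + 1) := by rw [← Finset.mul_sum, hIio_y]
      _ ≤ n ^ (j₁ : ℕ) * n := Nat.mul_le_mul_left _ (by have := j₁.isLt; omega)
      _ = n ^ ((j₁ : ℕ) + 1) := by ring
  have hApos : 0 < ∑ j ∈ Finset.Iio j₁, n ^ ((j : ℕ) + 1) := by
    refine Finset.sum_pos (fun j _ => pow_pos hn _) ?_
    exact ⟨⟨0, hn⟩, Finset.mem_Iio.mpr (Fin.lt_def.mpr (by simpa using hj₁pos))⟩
  have hlhs := hsplit (fun j => n ^ ((j : ℕ) + 1) * y j)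
  have hrhs := hsplit (fun j => n ^ ((j : ℕ) + 1))
  rw [hlhs, hrhs] at hobj
  rw [hj₁0, Nat.mul_zero] at hobj
  have hIoi_eq : ∑ j ∈ Finset.Ioi j₁, n ^ ((j : ℕ) + 1) * y j
      = ∑ j ∈ Finset.Ioi j₁, n ^ ((j : ℕ) + 1) := by
    refine Finset.sum_congr rfl fun j hj => ?_
    rw [hone j (Finset.mem_Ioi.mp hj), Nat.mul_one]
  rw [hIoi_eq] at hobj
  omega
end

section
/- Let $n \ge 1$, let $K \ge 1$, partition $[n]$ into nonempty classes $J^{(1)},\ldots,J^{(K)}$ with $n_k = |J^{(k)}|$, let $p_1 \le \cdots \le p_n$ be natural numbers, and let $m \ge 1$ with capacities $c_{i,k} \in \mathbb{N}$. Suppose $x : [m] \times [n] \to \mathbb{N}$ satisfies for each $k$: $\sum_{i=1}^m \sum_{j \in J^{(k)}} x_{i,j} = n_k$, and additionally $\sum_{j=1}^n n^j \sum_{i=1}^m x_{i,j} \ge \sum_{j=1}^n n^j$. If there is some $j$ with $\sum_i x_{i,j} \ne 1$, then there exist $k$ and indices $j_1 < j_2$ both in $J^{(k)}$ with $\sum_i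 x_{i,j_1} = 0$ and $\sum_i x_{i,j_2} > 1$. -/
theorem stmt_5 (n m K : ℕ) (hn : 1 ≤ n) (hm : 1 ≤ m) (hK : 1 ≤ K)
    (cls : Fin n → Fin K) (hcls : ∀ k : Fin K, ∃ j : Fin n, cls j = k)
    (p : Fin n → ℕ) (hp : Monotone p)
    (x : Fin m → Fin n → ℕ)
    (h1 : ∀ k : Fin K,
      ∑ i, ∑ j ∈ Finset.univ.filter (fun j => cls j = k), x i j
        = (Finset.univ.filter (fun j => cls j = k)).card)
    (h2 : ∑ j : Fin n, n ^ ((j : ℕ) + 1) * ∑ i, x i j ≥ ∑ j : Fin n, n ^ ((j : ℕ) + 1))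
    (hbad : ∃ j : Fin n, ∑ i, x i j ≠ 1) :
    ∃ j₁ j₂ : Fin n, j₁ < j₂ ∧ cls j₁ = cls j₂ ∧
      (∑ i, x i j₁) = 0 ∧ 1 < ∑ i, x i j₂ := by
  classical
  set s : Fin n → ℕ := fun j => ∑ i, x i j with hs
  have h1' : ∀ k : Fin K, ∑ j ∈ Finset.univ.filter (fun j => cls j = k), s j
      = (Finset.univ.filter (fun j => cls j = k)).card := by
    intro k
    rw [← h1 k, Finset.sum_comm]
  have htot : ∑ j, s j = n := by
    rw [← Finset.sum_fiberwise_of_maps_to (g := cls) (t := Finset.univ)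
      (fun i _ => Finset.mem_univ (cls i)) s]
    have hc : (Finset.univ : Finset (Fin n)).card
        = ∑ k : Fin K, (Finset.univ.filter (fun j => cls j = k)).card :=
      Finset.card_eq_sum_card_fiberwise (fun i _ => Finset.mem_univ (cls i))
    calc ∑ k : Fin K, ∑ j ∈ Finset.univ.filter (fun j => cls j = k), s j
        = ∑ k : Fin K, (Finset.univ.filter (fun j => cls j = k)).card := by
          exact Finset.sum_congr rfl fun k _ => h1' k
      _ = (Finset.univ : Finset (Fin n)).card := hc.symm
      _ = n := by simp
  -- the set of "bad" indices and its maximum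
  set S : Finset (Fin n) := Finset.univ.filter (fun j => s j ≠ 1) with hSdef
  have hSne : S.Nonempty := by
    obtain ⟨j, hj⟩ := hbad
    exact ⟨j, by simp [hSdef, hs, hj]⟩
  set J : Fin n := S.max' hSne with hJdef
  have hJS : J ∈ S := S.max'_mem hSne
  have hJbad : s J ≠ 1 := by simpa [hSdef] using hJS
  have hgt : ∀ j : Fin n, J < j → s j = 1 := by
    intro j hj
    by_contra hne
    exact absurd (S.le_max' j (by simp [hSdef, hne])) (not_le.mpr hj)
  -- key claim: s J ≥ 2
  have hJ2 : 1 < s J := by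
    rcases Nat.lt_or_ge 1 (s J) with h | h
    · exact h
    -- otherwise s J = 0; derive a contradiction with h2
    exfalso
    have hJ0 : s J = 0 := by omega
    -- split sums at J
    have hsplit : ∀ f : Fin n → ℕ,
        ∑ j ∈ Finset.univ.filter (fun j => j ≤ J), f j
          + ∑ j ∈ Finset.univ.filter (fun j => ¬ j ≤ J), f j = ∑ j, f j := by
      intro f
      exact Finset.sum_filter_add_sum_filter_not _ _ _
    have hIicIns : Finset.univ.filter (fun j => j ≤ J)
        = insert J (Finset.univ.filter (fun j => j < J)) := by
      ext j
      simp [le_iff_lt_or_eq, or_comm]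
    have hJnotmem : J ∉ Finset.univ.filter (fun j => j < J) := by simp
    -- the strict upper part: s = 1 there
    have hupper : ∀ f g : Fin n → ℕ, (∀ j, ¬ j ≤ J → f j = g j) →
        ∑ j ∈ Finset.univ.filter (fun j => ¬ j ≤ J), f j
          = ∑ j ∈ Finset.univ.filter (fun j => ¬ j ≤ J), g j := by
      intro f g hfg
      refine Finset.sum_congr rfl fun j hj => hfg j ?_
      simpa using hj
    have hup : ∑ j ∈ Finset.univ.filter (fun j => ¬ j ≤ J), n ^ ((j : ℕ) + 1) * s j
        = ∑ j ∈ Finset.univ.filter (fun j => ¬ j ≤ J), n ^ ((j : ℕ) + 1) := by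
      refine hupper _ _ fun j hj => ?_
      rw [hgt j (not_le.mp hj), mul_one]
    -- from h2, a ≥ b with a,b as sums over j ≤ J
    have hab : ∑ j ∈ Finset.univ.filter (fun j => j ≤ J), n ^ ((j : ℕ) + 1)
        ≤ ∑ j ∈ Finset.univ.filter (fun j => j ≤ J), n ^ ((j : ℕ) + 1) * s j := by
      have := h2
      rw [← hsplit (fun j => n ^ ((j : ℕ) + 1) * s j),
        ← hsplit (fun j => n ^ ((j : ℕ) + 1)), hup] at this
      exact Nat.le_of_add_le_add_right this
    -- sum of s over j ≤ J equals its cardinality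
    have hupS : ∑ j ∈ Finset.univ.filter (fun j => ¬ j ≤ J), s j
        = (Finset.univ.filter (fun j => ¬ j ≤ J)).card := by
      rw [hupper s (fun _ => 1) (fun j hj => hgt j (not_le.mp hj))]
      simp
    have hcards : (Finset.univ.filter (fun j => j ≤ J)).card
        + (Finset.univ.filter (fun j => ¬ j ≤ J)).card = n := by
      rw [Finset.card_filter_add_card_filter_not]
      simp
    have hIicS : ∑ j ∈ Finset.univ.filter (fun j => j ≤ J), s j
        = (Finset.univ.filter (fun j => j ≤ J)).card := by
      have h := hsplit s
      rw [htot, hupS] at h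
      omega
    -- sum of s over j < J
    have hIioS : ∑ j ∈ Finset.univ.filter (fun j => j < J), s j
        = (Finset.univ.filter (fun j => j ≤ J)).card := by
      have : ∑ j ∈ Finset.univ.filter (fun j => j ≤ J), s j
          = s J + ∑ j ∈ Finset.univ.filter (fun j => j < J), s j := by
        rw [hIicIns, Finset.sum_insert hJnotmem]
      omega
    have hcardle : (Finset.univ.filter (fun j => j ≤ J)).card ≤ n := by
      have := Finset.card_le_univ (Finset.univ.filter (fun j => j ≤ J))
      simpa using this
    -- bound A from above
    have hA : ∑ j ∈ Finset.univ.filter (fun j => j < J), n ^ ((j : ℕ) + 1) * s j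
        ≤ n ^ ((J : ℕ) + 1) := by
      calc ∑ j ∈ Finset.univ.filter (fun j => j < J), n ^ ((j : ℕ) + 1) * s j
          ≤ ∑ j ∈ Finset.univ.filter (fun j => j < J), n ^ (J : ℕ) * s j := by
            refine Finset.sum_le_sum fun j hj => ?_
            have hjJ : (j : ℕ) < (J : ℕ) :=
              Fin.lt_iff_val_lt_val.mp (Finset.mem_filter.mp hj).2
            exact Nat.mul_le_mul_right _ (Nat.pow_le_pow_right hn (by omega))
        _ = n ^ (J : ℕ) * ∑ j ∈ Finset.univ.filter (fun j => j < J), s j := by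
            rw [Finset.mul_sum]
        _ ≤ n ^ (J : ℕ) * n := by
            exact Nat.mul_le_mul_left _ (hIioS ▸ hcardle)
        _ = n ^ ((J : ℕ) + 1) := by ring
    -- bound from hab
    have ha : ∑ j ∈ Finset.univ.filter (fun j => j ≤ J), n ^ ((j : ℕ) + 1) * s j
        = ∑ j ∈ Finset.univ.filter (fun j => j < J), n ^ ((j : ℕ) + 1) * s j := by
      rw [hIicIns, Finset.sum_insert hJnotmem, hJ0, mul_zero, zero_add]
    have hb : ∑ j ∈ Finset.univ.filter (fun j => j ≤ J), n ^ ((j : ℕ) + 1)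
        = n ^ ((J : ℕ) + 1)
          + ∑ j ∈ Finset.univ.filter (fun j => j < J), n ^ ((j : ℕ) + 1) := by
      rw [hIicIns, Finset.sum_insert hJnotmem]
    rw [ha, hb] at hab
    -- hence B = 0, so Iio J is empty, so A = 0, contradiction with A ≥ n^{J+1} ≥ 1
    have hB0 : ∑ j ∈ Finset.univ.filter (fun j => j < J), n ^ ((j : ℕ) + 1) = 0 := by
      omega
    have hempty : Finset.univ.filter (fun j : Fin n => j < J) = ∅ := by
      by_contra hne
      obtain ⟨j0, hj0⟩ := Finset.nonempty_iff_ne_empty.mpr hne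
      have : 0 < ∑ j ∈ Finset.univ.filter (fun j => j < J), n ^ ((j : ℕ) + 1) :=
        Finset.sum_pos' (fun _ _ => Nat.zero_le _)
          ⟨j0, hj0, Nat.pow_pos hn⟩
      omega
    have hA0 : ∑ j ∈ Finset.univ.filter (fun j => j < J), n ^ ((j : ℕ) + 1) * s j = 0 := by
      rw [hempty]; simp
    have : 0 < n ^ ((J : ℕ) + 1) := Nat.pow_pos hn
    omega
  -- now find a zero in the class of J
  set T : Finset (Fin n) := Finset.univ.filter (fun j => cls j = cls J) with hTdef
  have hJT : J ∈ T := Finset.mem_filter.mpr ⟨Finset.mem_univ J, rfl⟩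
  have hzero : ∃ j₁ ∈ T, s j₁ = 0 := by
    by_contra hno
    push_neg at hno
    have hlt : ∑ j ∈ T, (1 : ℕ) < ∑ j ∈ T, s j := by
      refine Finset.sum_lt_sum (fun j hj => Nat.one_le_iff_ne_zero.mpr (hno j hj)) ⟨J, hJT, hJ2⟩
    rw [h1' (cls J), Finset.sum_const, smul_eq_mul, mul_one] at hlt
    exact lt_irrefl _ hlt
  obtain ⟨j₁, hj₁T, hj₁0⟩ := hzero
  have hj₁S : j₁ ∈ S := by simp [hSdef, hj₁0]
  have hj₁ne : j₁ ≠ J := by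
    intro h; rw [h] at hj₁0; omega
  have hj₁lt : j₁ < J := lt_of_le_of_ne (S.le_max' j₁ hj₁S) hj₁ne
  exact ⟨j₁, J, hj₁lt, (Finset.mem_filter.mp hj₁T).2, hj₁0, hJ2⟩
end
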